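/- Let k be a field, V a 3-dimensional vector space, and v₁, v₂ ∈ V linearly independent, w₁, w₂ ∈ W linearly independent (W also 3-dimensional). Denote U_v = v ∧ V ⊂ Λ²V. Then U_{v₁} ⊗ U_{w₁} ∩ U_{v₂} ⊗ U_{w₂} is the 1-dimensional span of (v₁ ∧ v₂) ⊗ (w₁ ∧ w₂), and consequently U_{v₁} ⊗ U_{w₁} + U_{v₂} ⊗ U_{w₂} is 7-dimensional in Λ²V ⊗ Λ²W. -/

import Mathlib

open TensorProduct ExteriorAlgebra Submodule

/-- The subspace `U_v = v ∧ V` of the exterior algebra of `V` (its degree-2 part):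
the range of `w ↦ ι v * ι w`. -/
noncomputable def wedgeSub (k : Type*) [Field k] (V : Type*) [AddCommGroup V] [Module k V]
    (v : V) : Submodule k (ExteriorAlgebra k V) :=
  LinearMap.range ((LinearMap.mulLeft k (ExteriorAlgebra.ι k v)).comp
    (ExteriorAlgebra.ι k (M := V)))

/-- The subspace `U ⊗ U'` of `A ⊗ B` determined by subspaces `U ⊆ A`, `U' ⊆ B`. -/
noncomputable def tensorSub (k : Type*) [Field k]
    (A B : Type*) [AddCommGroup A] [Module k A] [AddCommGroup B] [Module k B]
    (U : Submodule k A) (U' : Submodule k B) : Submodule k (A ⊗[k] B) :=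
  LinearMap.range (TensorProduct.map U.subtype U'.subtype)

section Helpers
variable {k V : Type*} [Field k] [AddCommGroup V] [Module k V]

noncomputable def fam2 (D : V [⋀^Fin 2]→ₗ[k] k) : ∀ n, V [⋀^Fin n]→ₗ[k] k
  | 2 => D
  | _ => 0

lemma fam2_two (D : V [⋀^Fin 2]→ₗ[k] k) : fam2 D 2 = D := rfl

lemma ι_mul_ι_eq (x y : V) : ι k x * ι k y = ιMulti k 2 ![x, y] := by
  simp [ιMulti_apply, List.ofFn_succ]

lemma lift_fam2 (D : V [⋀^Fin 2]→ₗ[k] k) (x y : V) :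
    liftAlternating (fam2 D) (ι k x * ι k y) = D ![x, y] := by
  rw [ι_mul_ι_eq, liftAlternating_apply_ιMulti, fam2_two]

lemma det_triple (b : Module.Basis (Fin 3) k V) (p q r : Fin 3) :
    b.det ![b p, b q, b r] =
      (Matrix.of fun i j => if (![p,q,r] j : Fin 3) = i then (1:k) else 0).det := by
  rw [Module.Basis.det_apply]
  congr 1
  ext i j
  fin_cases j <;>
    simp [Module.Basis.toMatrix_apply, Module.Basis.repr_self, Finsupp.single_apply] <;> split_ifs <;> simp_all

example (b : Module.Basis (Fin 3) k V) : b.det ![b 2, b 0, b 1] = 1 := by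
  rw [det_triple, Matrix.det_fin_three]
  simp

/-- The three wedge products of basis vectors spanning Λ². -/
noncomputable def wE (b : Module.Basis (Fin 3) k V) : Fin 3 → ExteriorAlgebra k V :=
  ![ι k (b 0) * ι k (b 1), ι k (b 0) * ι k (b 2), ι k (b 1) * ι k (b 2)]

noncomputable def wPhi (b : Module.Basis (Fin 3) k V) : Fin 3 → (ExteriorAlgebra k V →ₗ[k] k) :=
  ![liftAlternating (fam2 (b.det.curryLeft (b 2))),
    liftAlternating (fam2 (-(b.det.curryLeft (b 1)))),
    liftAlternating (fam2 (b.det.curryLeft (b 0)))]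

lemma evalD (b : Module.Basis (Fin 3) k V) (u p q : Fin 3) :
    liftAlternating (fam2 (b.det.curryLeft (b u))) (ι k (b p) * ι k (b q)) =
      b.det ![b u, b p, b q] := by
  rw [lift_fam2, AlternatingMap.curryLeft_apply_apply]

lemma evalDneg (b : Module.Basis (Fin 3) k V) (u p q : Fin 3) :
    liftAlternating (fam2 (-(b.det.curryLeft (b u)))) (ι k (b p) * ι k (b q)) =
      -(b.det ![b u, b p, b q]) := by
  rw [lift_fam2, AlternatingMap.neg_apply, AlternatingMap.curryLeft_apply_apply]

lemma detv (b : Module.Basis (Fin 3) k V) (u p q : Fin 3) :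
    b.det ![b u, b p, b q] =
      (if p = 1 then if q = 2 then if u = 0 then (1:k) else 0 else 0 else 0)
      - (if p = 0 then if q = 2 then if u = 1 then (1:k) else 0 else 0 else 0)
      + (if p = 0 then if q = 1 then if u = 2 then (1:k) else 0 else 0 else 0)
      - (if q = 1 then if p = 2 then if u = 0 then (1:k) else 0 else 0 else 0)
      + (if q = 0 then if p = 2 then if u = 1 then (1:k) else 0 else 0 else 0)
      - (if q = 0 then if p = 1 then if u = 2 then (1:k) else 0 else 0 else 0) := by
  rw [det_triple, Matrix.det_fin_three]
  fin_cases u <;> fin_cases p <;> fin_cases q <;> simp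

lemma wPhi_apply (b : Module.Basis (Fin 3) k V) (i j : Fin 3) :
    wPhi b i (wE b j) = if i = j then 1 else 0 := by
  fin_cases i <;> fin_cases j <;>
    simp [wPhi, wE, evalD, evalDneg, detv, Fin.ext_iff]

lemma tensor_indep {A B : Type*} [AddCommGroup A] [Module k A] [AddCommGroup B] [Module k B]
    (E : Fin 3 → A) (F : Fin 3 → B) (Φ : Fin 3 → (A →ₗ[k] k)) (Ψ : Fin 3 → (B →ₗ[k] k))
    (hΦ : ∀ i j, Φ i (E j) = if i = j then 1 else 0)
    (hΨ : ∀ i j, Ψ i (F j) = if i = j then 1 else 0) :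
    LinearIndependent k (fun p : Fin 3 × Fin 3 => E p.1 ⊗ₜ[k] F p.2) := by
  rw [Fintype.linearIndependent_iff]
  intro g hg p
  set L : A ⊗[k] B →ₗ[k] k :=
    (TensorProduct.lid k k).toLinearMap.comp (TensorProduct.map (Φ p.1) (Ψ p.2)) with hL
  have h0 : L (∑ q : Fin 3 × Fin 3, g q • E q.1 ⊗ₜ[k] F q.2) = 0 := by rw [hg, map_zero]
  rw [map_sum] at h0
  have hterm : ∀ q : Fin 3 × Fin 3,
      L (g q • E q.1 ⊗ₜ[k] F q.2) = if q = p then g q else 0 := by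
    intro q
    rw [map_smul, hL]
    simp only [LinearMap.coe_comp, Function.comp_apply, LinearEquiv.coe_coe,
      TensorProduct.map_tmul, TensorProduct.lid_tmul, hΦ, hΨ, smul_eq_mul]
    rcases eq_or_ne q p with h | h
    · subst h; simp
    · rw [if_neg h]
      have h' : ¬q.1 = p.1 ∨ ¬q.2 = p.2 := by
        by_contra hc
        push_neg at hc
        exact h (Prod.ext hc.1 hc.2)
      clear h
      rcases h' with h | h
      · rw [if_neg (show ¬p.1 = q.1 from fun e => h e.symm)]; ring
      · rw [if_neg (show ¬p.2 = q.2 from fun e => h e.symm)]; ring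
  rw [Finset.sum_congr rfl (fun q _ => hterm q), Finset.sum_ite_eq' Finset.univ p] at h0
  simpa using h0

lemma seven {M : Type*} [AddCommGroup M] [Module k M] (x : Fin 7 → M)
    (hx : LinearIndependent k x) :
    (span k (x '' {0,1,2,3}) ⊓ span k (x '' {0,4,5,6}) = span k {x 0}) ∧
    Module.finrank k (span k {x 0}) = 1 ∧
    Module.finrank k ↥(span k (x '' {0,1,2,3}) ⊔ span k (x '' {0,4,5,6})) = 7 := by
  have himg1 : (x '' {0,1,2,3}) = x '' {0} ∪ x '' {1,2,3} := by
    rw [← Set.image_union]; congr 1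
  have himg2 : (x '' {0,4,5,6}) = x '' {0} ∪ x '' {4,5,6} := by
    rw [← Set.image_union]; congr 1
  have hs : span k {x 0} = span k (x '' {0}) := by rw [Set.image_singleton]
  refine ⟨?_, ?_, ?_⟩
  · rw [himg1, himg2, Submodule.span_union, Submodule.span_union,
      sup_inf_assoc_of_le _ (le_sup_left : span k (x '' {0}) ≤ _)]
    have hd : span k (x '' {1,2,3}) ⊓ (span k (x '' {0}) ⊔ span k (x '' {4,5,6})) = ⊥ := by
      rw [← Submodule.span_union, ← Set.image_union]
      refine disjoint_iff.mp (hx.disjoint_span_image ?_)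
      rw [Set.disjoint_iff_forall_ne]
      rintro a ha b hb rfl
      simp only [Set.mem_insert_iff, Set.mem_singleton_iff] at ha hb
      rcases ha with rfl | rfl | rfl <;> revert hb <;> decide
    rw [hd, sup_bot_eq, hs]
  · rw [finrank_span_singleton (hx.ne_zero 0)]
  · rw [← Submodule.span_union, ← Set.image_union]
    have : ({0,1,2,3} ∪ {0,4,5,6} : Set (Fin 7)) = Set.univ := by
      ext i; fin_cases i <;> simp
    rw [this, Set.image_univ, finrank_span_eq_card hx, Fintype.card_fin]

lemma range_fin3 {β : Type*} (g : Fin 3 → β) : Set.range g = {g 0, g 1, g 2} := by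
  ext y
  constructor
  · rintro ⟨i, rfl⟩; fin_cases i <;> simp
  · rintro (rfl | rfl | rfl) <;> exact ⟨_, rfl⟩

lemma wedgeSub_eq_span (b : Module.Basis (Fin 3) k V) (v : V) :
    wedgeSub k V v = span k {ι k v * ι k (b 0), ι k v * ι k (b 1), ι k v * ι k (b 2)} := by
  rw [wedgeSub, LinearMap.range_eq_map, ← b.span_eq, Submodule.map_span, ← Set.range_comp]
  rw [range_fin3]
  rfl

lemma tensorSub_span_pair {A B : Type*} [AddCommGroup A] [Module k A] [AddCommGroup B]
    [Module k B] (a b : A) (c d : B) :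
    tensorSub k A B (span k {a, b}) (span k {c, d}) =
      span k {a ⊗ₜ[k] c, a ⊗ₜ[k] d, b ⊗ₜ[k] c, b ⊗ₜ[k] d} := by
  apply le_antisymm
  · rw [tensorSub, TensorProduct.range_map_eq_span_tmul, Submodule.span_le]
    rintro t ⟨m, n, rfl⟩
    obtain ⟨α, β, hm⟩ := Submodule.mem_span_pair.mp m.2
    obtain ⟨γ, δ, hn⟩ := Submodule.mem_span_pair.mp n.2
    have he : ((Submodule.subtype _) m) ⊗ₜ[k] ((Submodule.subtype _) n) =
        (α*γ) • a ⊗ₜ[k] c + (α*δ) • a ⊗ₜ[k] d + (β*γ) • b ⊗ₜ[k] c + (β*δ) • b ⊗ₜ[k] d := by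
      rw [Submodule.subtype_apply, Submodule.subtype_apply, ← hm, ← hn]
      simp only [TensorProduct.tmul_add, TensorProduct.add_tmul, TensorProduct.smul_tmul,
        TensorProduct.tmul_smul, smul_smul]
      module
    rw [SetLike.mem_coe, he]
    refine add_mem (add_mem (add_mem ?_ ?_) ?_) ?_ <;>
      exact smul_mem _ _ (subset_span (by simp))
  · rw [Submodule.span_le]
    intro t ht
    simp only [Set.mem_insert_iff, Set.mem_singleton_iff] at ht
    have ha : a ∈ span k ({a,b} : Set A) := subset_span (by simp)
    have hb : b ∈ span k ({a,b} : Set A) := subset_span (by simp)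
    have hc : c ∈ span k ({c,d} : Set B) := subset_span (by simp)
    have hd : d ∈ span k ({c,d} : Set B) := subset_span (by simp)
    rcases ht with rfl | rfl | rfl | rfl
    · exact ⟨(⟨a, ha⟩ : span k ({a,b} : Set A)) ⊗ₜ[k] (⟨c, hc⟩ : span k ({c,d} : Set B)), by simp⟩
    · exact ⟨(⟨a, ha⟩ : span k ({a,b} : Set A)) ⊗ₜ[k] (⟨d, hd⟩ : span k ({c,d} : Set B)), by simp⟩
    · exact ⟨(⟨b, hb⟩ : span k ({a,b} : Set A)) ⊗ₜ[k] (⟨c, hc⟩ : span k ({c,d} : Set B)), by simp⟩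
    · exact ⟨(⟨b, hb⟩ : span k ({a,b} : Set A)) ⊗ₜ[k] (⟨d, hd⟩ : span k ({c,d} : Set B)), by simp⟩

lemma exists_basis_ext [FiniteDimensional k V] (hV : Module.finrank k V = 3)
    (v₁ v₂ : V) (hv : LinearIndependent k ![v₁, v₂]) :
    ∃ b : Module.Basis (Fin 3) k V, b 0 = v₁ ∧ b 1 = v₂ := by
  have hne : span k (Set.range ![v₁, v₂]) ≠ ⊤ := by
    intro h
    have h1 : Module.finrank k (span k (Set.range ![v₁, v₂])) = 2 := by
      rw [finrank_span_eq_card hv, Fintype.card_fin]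
    rw [h, finrank_top, hV] at h1
    omega
  obtain ⟨v₃, hv₃⟩ : ∃ v₃, v₃ ∉ span k (Set.range ![v₁, v₂]) := by
    by_contra hc
    push_neg at hc
    exact hne (Submodule.eq_top_iff'.mpr hc)
  have hsnoc : LinearIndependent k (Fin.snoc ![v₁, v₂] v₃ : Fin 3 → V) :=
    linearIndependent_fin_snoc.mpr ⟨hv, hv₃⟩
  refine ⟨basisOfLinearIndependentOfCardEqFinrank hsnoc (by simp [hV]), ?_, ?_⟩ <;>
    · rw [coe_basisOfLinearIndependentOfCardEqFinrank]
      simp [Fin.snoc]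

lemma span_pair_neg {M : Type*} [AddCommGroup M] [Module k M] (a b : M) :
    span k {-a, b} = span k ({a, b} : Set M) := by
  have h : ∀ c d : M, span k {-c, d} ≤ span k ({c, d} : Set M) := by
    intro c d
    rw [Submodule.span_le]
    intro t ht
    simp only [Set.mem_insert_iff, Set.mem_singleton_iff] at ht
    rcases ht with rfl | rfl
    · exact neg_mem (subset_span (by simp))
    · exact subset_span (by simp)
  refine le_antisymm (h a b) ?_
  have h2 := h (-a) b
  rwa [neg_neg] at h2

lemma wedge_span_fst (b : Module.Basis (Fin 3) k V) :
    wedgeSub k V (b 0) = span k {ι k (b 0) * ι k (b 1), ι k (b 0) * ι k (b 2)} := by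
  rw [wedgeSub_eq_span b (b 0), ι_sq_zero, Submodule.span_insert_zero]

lemma wedge_span_snd (b : Module.Basis (Fin 3) k V) :
    wedgeSub k V (b 1) = span k {ι k (b 0) * ι k (b 1), ι k (b 1) * ι k (b 2)} := by
  rw [wedgeSub_eq_span b (b 1), ι_sq_zero,
    show ({ι k (b 1) * ι k (b 0), 0, ι k (b 1) * ι k (b 2)} :
        Set (ExteriorAlgebra k V)) =
      insert 0 {ι k (b 1) * ι k (b 0), ι k (b 1) * ι k (b 2)} from Set.insert_comm _ _ _,
    Submodule.span_insert_zero,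
    show ι k (b 1) * ι k (b 0) = -(ι k (b 0) * ι k (b 1)) by
      rw [eq_neg_iff_add_eq_zero, add_comm]; exact ι_add_mul_swap _ _,
    span_pair_neg]

end Helpers

/-- Let `k` be a field, `V`, `W` 3-dimensional vector spaces, `v₁, v₂ ∈ V`
linearly independent and `w₁, w₂ ∈ W` linearly independent.  With `U_v = v ∧ V ⊆ Λ²V`,
the intersection `U_{v₁} ⊗ U_{w₁} ∩ U_{v₂} ⊗ U_{w₂}` is the 1-dimensional span of
`(v₁ ∧ v₂) ⊗ (w₁ ∧ w₂)`, and consequently `U_{v₁} ⊗ U_{w₁} + U_{v₂} ⊗ U_{w₂}` is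
7-dimensional in `Λ²V ⊗ Λ²W` (formalized inside the exterior algebras). -/
theorem stmt3 (k : Type*) [Field k]
    (V W : Type*) [AddCommGroup V] [Module k V] [AddCommGroup W] [Module k W]
    [FiniteDimensional k V] [FiniteDimensional k W]
    (hV : Module.finrank k V = 3) (hW : Module.finrank k W = 3)
    (v₁ v₂ : V) (w₁ w₂ : W)
    (hv : LinearIndependent k ![v₁, v₂]) (hw : LinearIndependent k ![w₁, w₂]) :
    (tensorSub k _ _ (wedgeSub k V v₁) (wedgeSub k W w₁) ⊓
        tensorSub k _ _ (wedgeSub k V v₂) (wedgeSub k W w₂)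
      = Submodule.span k
          {(ExteriorAlgebra.ι k v₁ * ExteriorAlgebra.ι k v₂) ⊗ₜ[k]
            (ExteriorAlgebra.ι k w₁ * ExteriorAlgebra.ι k w₂)}) ∧
    Module.finrank k (Submodule.span k
        {(ExteriorAlgebra.ι k v₁ * ExteriorAlgebra.ι k v₂) ⊗ₜ[k]
          (ExteriorAlgebra.ι k w₁ * ExteriorAlgebra.ι k w₂)} :
        Submodule k (ExteriorAlgebra k V ⊗[k] ExteriorAlgebra k W)) = 1 ∧
    Module.finrank k
      ↥(tensorSub k _ _ (wedgeSub k V v₁) (wedgeSub k W w₁) ⊔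
          tensorSub k _ _ (wedgeSub k V v₂) (wedgeSub k W w₂)) = 7 := by
  obtain ⟨bV, hb0, hb1⟩ := exists_basis_ext hV v₁ v₂ hv
  obtain ⟨bW, hc0, hc1⟩ := exists_basis_ext hW w₁ w₂ hw
  have hy : LinearIndependent k (fun p : Fin 3 × Fin 3 => wE bV p.1 ⊗ₜ[k] wE bW p.2) :=
    tensor_indep _ _ _ _ (wPhi_apply bV) (wPhi_apply bW)
  set pm : Fin 7 → Fin 3 × Fin 3 := ![(0,0),(0,1),(1,0),(1,1),(0,2),(2,0),(2,2)] with hpm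
  have hpinj : Function.Injective pm := by decide
  set x : Fin 7 → ExteriorAlgebra k V ⊗[k] ExteriorAlgebra k W :=
    (fun p : Fin 3 × Fin 3 => wE bV p.1 ⊗ₜ[k] wE bW p.2) ∘ pm with hx
  have hxi : LinearIndependent k x := hy.comp pm hpinj
  obtain ⟨h1, h2, h3⟩ := seven x hxi
  have i1 : x '' {0,1,2,3} = {x 0, x 1, x 2, x 3} := by
    rw [Set.image_insert_eq, Set.image_insert_eq, Set.image_insert_eq, Set.image_singleton]
  have i2 : x '' {0,4,5,6} = {x 0, x 4, x 5, x 6} := by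
    rw [Set.image_insert_eq, Set.image_insert_eq, Set.image_insert_eq, Set.image_singleton]
  rw [i1, i2] at h1 h3
  have e0 : x 0 = (ι k v₁ * ι k v₂) ⊗ₜ[k] (ι k w₁ * ι k w₂) := by
    simp [hx, hpm, wE, hb0, hb1, hc0, hc1]
  have T1 : tensorSub k _ _ (wedgeSub k V v₁) (wedgeSub k W w₁) =
      Submodule.span k {x 0, x 1, x 2, x 3} := by
    rw [← hb0, ← hc0, wedge_span_fst bV, wedge_span_fst bW, tensorSub_span_pair]
    rfl
  have T2 : tensorSub k _ _ (wedgeSub k V v₂) (wedgeSub k W w₂) =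
      Submodule.span k {x 0, x 4, x 5, x 6} := by
    rw [← hb1, ← hc1, wedge_span_snd bV, wedge_span_snd bW, tensorSub_span_pair]
    rfl
  refine ⟨?_, ?_, ?_⟩
  · rw [T1, T2, h1, e0]
  · rw [← e0]; exact h2
  · rw [T1, T2]; exact h3
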